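/- Let K be a finite extension of Q_p with ring of integers O, uniformizer π, normalized valuation v, and e = v(p). Let λ(T) = c + a_0 π T + (a_1/2) π² T² + ⋯ + (a_m/(m+1)) π^{m+1} T^{m+1} + ⋯ be a power series (convergent on O) where a_i ∈ O, v(a_i) > 0 for i < n, and a_n is a unit. Then λ has at most n + 1 + δ(v, n) zeros in O, where δ(v, n) = max{ d ≥ 0 : e·v_p(n+1) + d ≤ e·v_p(n+d+1) }. -/

import Mathlib

/-- `δ(v,n) = max{ d ≥ 0 : e·v_p(n+1) + d ≤ e·v_p(n+d+1) }`. -/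
noncomputable def deltaFn (p e n : ℕ) : ℕ :=
  sSup {d : ℕ | e * padicValNat p (n + 1) + d ≤ e * padicValNat p (n + d + 1)}

/-- The coefficients of the power series
`λ(T) = c + a₀ π T + (a₁/2) π² T² + ⋯ + (a_m/(m+1)) π^{m+1} T^{m+1} + ⋯`. -/
noncomputable def lamCoeff {K : Type*} [Field K] (c : K) (a : ℕ → K) (π : K) :
    ℕ → K :=
  fun m => if m = 0 then c else a (m - 1) * π ^ m / (m : K)

open Filter in
/-- A linear function is eventually dominated by `2 ^ ·`. -/
lemma auxLinearLtPow (a b : ℕ) : ∃ D : ℕ, ∀ k, D ≤ k → a + b * k < 2 ^ k := by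
  refine ⟨(a + b + 1) * (b + 1), fun k hk => ?_⟩
  set M := a + b + 1 with hM
  have hMk : M ≤ k := le_trans (by nlinarith) hk
  have h1 : M + 1 ≤ 2 ^ M := Nat.lt_two_pow_self (n := M)
  have h2 : (k - M) + 1 ≤ 2 ^ (k - M) := Nat.lt_two_pow_self (n := k - M)
  have h3 : 2 ^ M * 2 ^ (k - M) = 2 ^ k := by
    rw [← pow_add]; congr 1; omega
  have h4 : (M + 1) * ((k - M) + 1) ≤ 2 ^ k := by
    rw [← h3]; exact Nat.mul_le_mul h1 h2
  have h5 : M * (b + 1) ≤ k := hk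
  set j := k - M with hj
  have hkj : k = M + j := by omega
  have hfin : a + b * k < (M + 1) * (j + 1) := by nlinarith
  omega

open Filter in
lemma exists_forall_le_of_tendsto_zero (f : ℕ → ℝ) (hf : Tendsto f atTop (nhds 0))
    (m0 : ℕ) (h0 : 0 < f m0) :
    ∃ N, (∀ m, f m ≤ f N) ∧ (∀ m, N < m → f m < f N) := by
  obtain ⟨M, hM⟩ := Filter.eventually_atTop.mp (hf.eventually_lt_const h0)
  have hm0M : m0 < M := by
    by_contra h
    exact lt_irrefl _ (hM m0 (not_lt.mp h))
  have hne : (Finset.range M).Nonempty := ⟨m0, Finset.mem_range.mpr hm0M⟩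
  set μ := (Finset.range M).sup' hne f with hμ
  have hm0μ : f m0 ≤ μ := Finset.le_sup' f (Finset.mem_range.mpr hm0M)
  obtain ⟨N0, hN0mem, hN0⟩ := Finset.exists_mem_eq_sup' hne f
  set T := (Finset.range M).filter (fun m => μ ≤ f m) with hT
  have hTne : T.Nonempty := ⟨N0, Finset.mem_filter.mpr ⟨hN0mem, le_of_eq hN0⟩⟩
  set N := T.max' hTne with hNdef
  have hNT : N ∈ T := T.max'_mem hTne
  have hNμ : f N = μ :=
    le_antisymm (Finset.le_sup' f (Finset.mem_filter.mp hNT).1) (Finset.mem_filter.mp hNT).2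
  refine ⟨N, ?_, ?_⟩
  · intro m
    rw [hNμ]
    by_cases hmM : m < M
    · exact Finset.le_sup' f (Finset.mem_range.mpr hmM)
    · have := hM m (not_lt.mp hmM)
      linarith
  · intro m hm
    rw [hNμ]
    by_cases hmM : m < M
    · rcases lt_or_ge (f m) μ with h | h
      · exact h
      · exact absurd (Finset.le_max' T m (Finset.mem_filter.mpr ⟨Finset.mem_range.mpr hmM, h⟩))
          (not_le.mpr hm)
    · have := hM m (not_lt.mp hmM); linarith

section Ultrametric

open Filter

variable {K : Type*} [NormedField K] [IsUltrametricDist K]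

lemma normTermLe (u z : K) (hz : ‖z‖ ≤ 1) (k : ℕ) : ‖u * z ^ k‖ ≤ ‖u‖ := by
  rw [norm_mul, norm_pow]
  exact mul_le_of_le_one_right (norm_nonneg _) (pow_le_one₀ (norm_nonneg _) hz)

lemma normAddEqOfLt (u v : K) (h : ‖v‖ < ‖u‖) : ‖u + v‖ = ‖u‖ := by
  refine le_antisymm (le_trans (IsUltrametricDist.norm_add_le_max u v) (max_le le_rfl h.le)) ?_
  have h2 : ‖u‖ ≤ max ‖u + v‖ ‖v‖ := by
    calc ‖u‖ = ‖(u + v) + (-v)‖ := congrArg norm (by ring)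
      _ ≤ max ‖u + v‖ ‖-v‖ := IsUltrametricDist.norm_add_le_max _ _
      _ = max ‖u + v‖ ‖v‖ := by rw [norm_neg]
  rcases max_cases ‖u + v‖ ‖v‖ with ⟨hmax, _⟩ | ⟨hmax, _⟩
  · rwa [hmax] at h2
  · rw [hmax] at h2; linarith

lemma tendstoNormShift (c : ℕ → K) (hc : Tendsto (fun m => ‖c m‖) atTop (nhds 0)) (s : ℕ) :
    Tendsto (fun m => ‖c (m + s)‖) atTop (nhds 0) :=
  hc.comp (tendsto_add_atTop_nat s)

variable [CompleteSpace K]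

lemma summableAux (c : ℕ → K) (hc : Tendsto (fun m => ‖c m‖) atTop (nhds 0))
    (x : K) (hx : ‖x‖ ≤ 1) : Summable fun m => c m * x ^ m := by
  apply NonarchimedeanAddGroup.summable_of_tendsto_cofinite_zero
  rw [Nat.cofinite_eq_atTop]
  exact squeeze_zero_norm (fun m => normTermLe (c m) x hx m) hc

lemma memZeroIff (c : ℕ → K) (hc : Tendsto (fun m => ‖c m‖) atTop (nhds 0))
    (x : K) (hx : ‖x‖ ≤ 1) :
    Tendsto (fun M => ∑ m ∈ Finset.range M, c m * x ^ m) atTop (nhds 0) ↔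
      ∑' m, c m * x ^ m = 0 := by
  have hs := summableAux c hc x hx
  constructor
  · intro h; exact tendsto_nhds_unique hs.hasSum.tendsto_sum_nat h
  · intro h; simpa [h] using hs.hasSum.tendsto_sum_nat

lemma normTsumLt (g : ℕ → K) (hg : Tendsto g atTop (nhds 0)) {B : ℝ} (hB : 0 < B)
    (h : ∀ m, ‖g m‖ < B) : ‖∑' m, g m‖ < B := by
  by_cases hz : ∀ m, g m = 0
  · have h0 : ∑' m, g m = 0 := by rw [tsum_congr hz, tsum_zero]
    rw [h0, norm_zero]; exact hB
  · push_neg at hz; obtain ⟨m0, hm0⟩ := hz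
    obtain ⟨N, hNle, _⟩ := exists_forall_le_of_tendsto_zero (fun m => ‖g m‖)
      (tendsto_zero_iff_norm_tendsto_zero.mp hg) m0 (norm_pos_iff.mpr hm0)
    exact lt_of_le_of_lt
      (IsUltrametricDist.norm_tsum_le_of_forall_le_of_nonneg (norm_nonneg _) hNle) (h N)

/-- Strassmann's theorem: if `‖c N‖` is maximal among the `‖c m‖`, and strictly maximal
compared to all later coefficients, then the power series `∑ c m x ^ m` has at most `N`
zeros in the closed unit ball. -/
theorem strassmann (N : ℕ) :
    ∀ (c : ℕ → K), Tendsto (fun m => ‖c m‖) atTop (nhds 0) →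
      c N ≠ 0 → (∀ m, ‖c m‖ ≤ ‖c N‖) → (∀ m, N < m → ‖c m‖ < ‖c N‖) →
      {x : K | ‖x‖ ≤ 1 ∧
          Tendsto (fun M => ∑ m ∈ Finset.range M, c m * x ^ m) atTop (nhds 0)}.Finite ∧
        {x : K | ‖x‖ ≤ 1 ∧
          Tendsto (fun M => ∑ m ∈ Finset.range M, c m * x ^ m) atTop (nhds 0)}.ncard ≤ N := by
  induction N with
  | zero =>
    intro c hc h0 hle hlt
    have hempty : {x : K | ‖x‖ ≤ 1 ∧
        Tendsto (fun M => ∑ m ∈ Finset.range M, c m * x ^ m) atTop (nhds 0)} = ∅ := by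
      rw [Set.eq_empty_iff_forall_notMem]
      rintro x ⟨hx1, hxt⟩
      have hsum : ∑' m, c m * x ^ m = 0 := (memZeroIff c hc x hx1).mp hxt
      have hsplit := Summable.tsum_eq_zero_add (summableAux c hc x hx1)
      rw [hsum, pow_zero, mul_one] at hsplit
      have htail : ‖∑' m, c (m + 1) * x ^ (m + 1)‖ < ‖c 0‖ := by
        refine normTsumLt _ ?_ (norm_pos_iff.mpr h0) ?_
        · exact squeeze_zero_norm (fun m => normTermLe (c (m + 1)) x hx1 (m + 1))
            (tendstoNormShift c hc 1)
        · intro m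
          exact lt_of_le_of_lt (normTermLe (c (m + 1)) x hx1 (m + 1)) (hlt (m + 1) (Nat.succ_pos m))
      have hneg : ∑' m, c (m + 1) * x ^ (m + 1) = -(c 0) :=
        eq_neg_of_add_eq_zero_right hsplit.symm
      rw [hneg, norm_neg] at htail
      exact lt_irrefl _ htail
    rw [hempty]
    simp
  | succ N ih =>
    intro c hc h0 hle hlt
    rcases Set.eq_empty_or_nonempty {x : K | ‖x‖ ≤ 1 ∧
        Tendsto (fun M => ∑ m ∈ Finset.range M, c m * x ^ m) atTop (nhds 0)} with hZ | ⟨r, hr⟩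
    · rw [hZ]; simp
    obtain ⟨hr1, hrt⟩ := hr
    have hFr : ∑' m, c m * r ^ m = 0 := (memZeroIff c hc r hr1).mp hrt
    set b : ℕ → K := fun j => ∑' k, c (j + k + 1) * r ^ k with hbdef
    have hshift : ∀ j : ℕ, Tendsto (fun k => ‖c (j + k + 1)‖) atTop (nhds 0) := fun j =>
      Filter.Tendsto.congr (fun k => congrArg (fun i => ‖c i‖) (by omega))
        (tendstoNormShift c hc (j + 1))
    have hfib : ∀ j, Summable fun k => c (j + k + 1) * r ^ k := fun j =>
      summableAux _ (hshift j) r hr1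
    -- basic norm bound for b
    have hb_le : ∀ (j : ℕ) (B : ℝ), 0 ≤ B → (∀ m, j < m → ‖c m‖ ≤ B) → ‖b j‖ ≤ B := by
      intro j B hB hBm
      refine IsUltrametricDist.norm_tsum_le_of_forall_le_of_nonneg hB fun k => ?_
      exact le_trans (normTermLe (c (j + k + 1)) r hr1 k) (hBm _ (by omega))
    have hbN : ‖b N‖ = ‖c (N + 1)‖ := by
      have hsplit : b N = c (N + 0 + 1) * r ^ 0 + ∑' k, c (N + (k + 1) + 1) * r ^ (k + 1) :=
        Summable.tsum_eq_zero_add (hfib N)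
      rw [pow_zero, mul_one] at hsplit
      have htail : ‖∑' k, c (N + (k + 1) + 1) * r ^ (k + 1)‖ < ‖c (N + 1)‖ := by
        refine normTsumLt _ ?_ (norm_pos_iff.mpr h0) ?_
        · refine squeeze_zero_norm (fun k => normTermLe (c (N + (k + 1) + 1)) r hr1 (k + 1)) ?_
          exact Filter.Tendsto.congr (fun k => congrArg (fun i => ‖c i‖) (by omega))
            (tendstoNormShift c hc (N + 2))
        · intro k
          exact lt_of_le_of_lt (normTermLe (c (N + (k + 1) + 1)) r hr1 (k + 1))
            (hlt _ (by omega))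
      rw [hsplit]
      have harith : (N + 0 + 1) = N + 1 := by omega
      rw [harith]
      exact normAddEqOfLt _ _ htail
    have hb0 : b N ≠ 0 := norm_pos_iff.mp (hbN ▸ norm_pos_iff.mpr h0)
    have hble : ∀ j, ‖b j‖ ≤ ‖b N‖ := fun j => by
      rw [hbN]; exact hb_le j _ (norm_nonneg _) fun m _ => hle m
    have hblt : ∀ j, N < j → ‖b j‖ < ‖b N‖ := by
      intro j hj
      rw [hbN]
      refine normTsumLt _ ?_ (norm_pos_iff.mpr h0) ?_
      · exact squeeze_zero_norm (fun k => normTermLe (c (j + k + 1)) r hr1 k) (hshift j)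
      · intro k
        exact lt_of_le_of_lt (normTermLe (c (j + k + 1)) r hr1 k) (hlt _ (by omega))
    have hbtend : Tendsto (fun j => ‖b j‖) atTop (nhds 0) := by
      rw [Metric.tendsto_atTop]
      intro ε hε
      obtain ⟨M, hM⟩ := Metric.tendsto_atTop.mp hc (ε / 2) (by positivity)
      refine ⟨M, fun j hj => ?_⟩
      rw [Real.dist_eq, sub_zero, abs_of_nonneg (norm_nonneg _)]
      have hble2 : ‖b j‖ ≤ ε / 2 := by
        refine hb_le j (ε / 2) (by positivity) fun m hm => ?_
        have := hM m (by omega)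
        rw [Real.dist_eq, sub_zero, abs_of_nonneg (norm_nonneg _)] at this
        exact this.le
      linarith
    -- the key identity
    have key : ∀ x : K, ‖x‖ ≤ 1 →
        ∑' m, c m * x ^ m = (x - r) * ∑' j, b j * x ^ j := by
      intro x hx
      set g : ℕ × ℕ → K := fun q => c (q.1 + q.2 + 1) * r ^ q.2 * x ^ q.1 with hgdef
      have hgbound : ∀ q : ℕ × ℕ, ‖g q‖ ≤ ‖c (q.1 + q.2 + 1)‖ := by
        intro q
        exact le_trans (normTermLe (c (q.1 + q.2 + 1) * r ^ q.2) x hx q.1)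
          (normTermLe (c (q.1 + q.2 + 1)) r hr1 q.2)
      have hgsum : Summable g := by
        apply NonarchimedeanAddGroup.summable_of_tendsto_cofinite_zero
        rw [tendsto_zero_iff_norm_tendsto_zero, Metric.tendsto_nhds]
        intro ε hε
        rw [Filter.eventually_cofinite]
        obtain ⟨M, hM⟩ := Metric.tendsto_atTop.mp hc ε hε
        refine Set.Finite.subset ((Finset.range M ×ˢ Finset.range M).finite_toSet) ?_
        intro q hq
        simp only [Set.mem_setOf_eq, Real.dist_eq, sub_zero,
          abs_of_nonneg (norm_nonneg _), not_lt] at hq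
        simp only [Finset.coe_product, Set.mem_prod, Finset.mem_coe, Finset.mem_range]
        by_contra hcon
        have hMq : M ≤ q.1 + q.2 + 1 := by omega
        have := hM (q.1 + q.2 + 1) hMq
        rw [Real.dist_eq, sub_zero, abs_of_nonneg (norm_nonneg _)] at this
        exact absurd (lt_of_le_of_lt (le_trans hq (hgbound q)) this) (lt_irrefl _)
      -- G-side
      have hG : ∑' q, g q = ∑' j, b j * x ^ j := by
        rw [Summable.tsum_prod' hgsum hgsum.prod_factor]
        refine tsum_congr fun j => ?_
        simp only [hgdef, hbdef]
        exact tsum_mul_right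
      -- F-side
      set φ : ℕ × ℕ → ℕ × ℕ := fun q => (q.1 + q.2 + 1, q.1) with hφdef
      have hinj : Function.Injective φ := by
        intro q q' h
        simp only [hφdef, Prod.mk.injEq] at h
        obtain ⟨h1, h2⟩ := h
        exact Prod.ext h2 (by omega)
      set h2f : ℕ × ℕ → K := fun pr =>
        if pr.2 < pr.1 then (x - r) * (c pr.1 * r ^ (pr.1 - 1 - pr.2) * x ^ pr.2) else 0
        with h2fdef
      have hsupp0 : ∀ pr : ℕ × ℕ, pr ∉ Set.range φ → h2f pr = 0 := by
        intro pr hpr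
        simp only [h2fdef]
        rw [if_neg]
        intro hlt2
        refine hpr ⟨(pr.2, pr.1 - 1 - pr.2), ?_⟩
        simp only [hφdef]
        exact Prod.ext (by omega) rfl
      have hcomp : ∀ q : ℕ × ℕ, h2f (φ q) = (x - r) * g q := by
        intro q
        simp only [h2fdef, hφdef, hgdef]
        rw [if_pos (by omega : q.1 < q.1 + q.2 + 1)]
        rw [show q.1 + q.2 + 1 - 1 - q.1 = q.2 from by omega]
      have hsum2 : Summable h2f := by
        rw [← Function.Injective.summable_iff hinj hsupp0]
        exact (hgsum.mul_left (x - r)).congr fun q => (hcomp q).symm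
      have hFside : ∑' q : ℕ × ℕ, (x - r) * g q = ∑' m, c m * (x ^ m - r ^ m) := by
        have e1 : ∑' q : ℕ × ℕ, (x - r) * g q = ∑' pr, h2f pr := by
          rw [← hinj.tsum_eq (f := h2f) ?hsupp]
          case hsupp =>
            intro pr hpr
            by_contra hn
            exact hpr (hsupp0 pr hn)
          exact tsum_congr fun q => (hcomp q).symm
        rw [e1, Summable.tsum_prod' hsum2 hsum2.prod_factor]
        refine tsum_congr fun m => ?_
        have e2 : ∑' i, h2f (m, i) =
            ∑ i ∈ Finset.range m, ((x - r) * (c m * r ^ (m - 1 - i) * x ^ i)) := by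
          rw [tsum_eq_sum (s := Finset.range m) (fun i hi => by
            simp only [h2fdef]
            rw [if_neg (by simpa using hi)])]
          exact Finset.sum_congr rfl fun i hi => by
            simp only [h2fdef]
            rw [if_pos (Finset.mem_range.mp hi)]
        rw [e2, ← Finset.mul_sum]
        have e3 : ∑ i ∈ Finset.range m, c m * r ^ (m - 1 - i) * x ^ i =
            c m * ∑ i ∈ Finset.range m, x ^ i * r ^ (m - 1 - i) := by
          rw [Finset.mul_sum]
          exact Finset.sum_congr rfl fun i _ => by ring
        rw [e3]
        calc (x - r) * (c m * ∑ i ∈ Finset.range m, x ^ i * r ^ (m - 1 - i))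
            = c m * ((∑ i ∈ Finset.range m, x ^ i * r ^ (m - 1 - i)) * (x - r)) := by ring
          _ = c m * (x ^ m - r ^ m) := by rw [geom_sum₂_mul]
      have hsx : Summable fun m => c m * x ^ m := summableAux c hc x hx
      have hsr : Summable fun m => c m * r ^ m := summableAux c hc r hr1
      have hdiff : ∑' m, c m * (x ^ m - r ^ m) =
          (∑' m, c m * x ^ m) - ∑' m, c m * r ^ m := by
        rw [← Summable.tsum_sub hsx hsr]
        exact tsum_congr fun m => by ring
      calc ∑' m, c m * x ^ m
          = (∑' m, c m * x ^ m) - ∑' m, c m * r ^ m := by rw [hFr, sub_zero]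
        _ = ∑' m, c m * (x ^ m - r ^ m) := hdiff.symm
        _ = ∑' q : ℕ × ℕ, (x - r) * g q := hFside.symm
        _ = (x - r) * ∑' q, g q := tsum_mul_left
        _ = (x - r) * ∑' j, b j * x ^ j := by rw [hG]
    obtain ⟨hfinb, hcardb⟩ := ih b hbtend hb0 hble hblt
    have hsub : {x : K | ‖x‖ ≤ 1 ∧
        Tendsto (fun M => ∑ m ∈ Finset.range M, c m * x ^ m) atTop (nhds 0)} ⊆
        insert r {x : K | ‖x‖ ≤ 1 ∧
          Tendsto (fun M => ∑ m ∈ Finset.range M, b m * x ^ m) atTop (nhds 0)} := by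
      intro x hx
      by_cases hxr : x = r
      · exact Set.mem_insert_iff.mpr (Or.inl hxr)
      refine Set.mem_insert_iff.mpr (Or.inr ?_)
      obtain ⟨hx1, hxt⟩ := hx
      refine ⟨hx1, (memZeroIff b hbtend x hx1).mpr ?_⟩
      have h1 : ∑' m, c m * x ^ m = 0 := (memZeroIff c hc x hx1).mp hxt
      have h2 := key x hx1
      rw [h1] at h2
      exact (mul_eq_zero.mp h2.symm).resolve_left (sub_ne_zero.mpr hxr)
    constructor
    · exact (hfinb.insert r).subset hsub
    · refine le_trans (Set.ncard_le_ncard hsub (hfinb.insert r)) ?_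
      refine le_trans (Set.ncard_insert_le r _) ?_
      omega

end Ultrametric

section OfAddHelpers

lemma coeOfAddPow (α : ℤ) (k : ℕ) :
    (((Multiplicative.ofAdd α : Multiplicative ℤ) : WithZero (Multiplicative ℤ))) ^ k
      = ((Multiplicative.ofAdd ((k : ℤ) * α) : Multiplicative ℤ) : WithZero (Multiplicative ℤ)) := by
  induction k with
  | zero => simp
  | succ k ih =>
    rw [pow_succ, ih, ← WithZero.coe_mul, ← ofAdd_add]
    congr 2
    push_cast
    ring

end OfAddHelpers

open Filter in
/-- Let `K` be a finite extension of `ℚ_p` (modelled as a complete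
discretely valued field of residue characteristic `p`), with ring of integers
`O = {x : v x ≤ 1}`, uniformizer `π` (`v π = -1` multiplicatively, i.e. `v(π) = 1`
additively normalized) and `e = v(p)`.  Let
`λ(T) = c + a₀ π T + (a₁/2) π² T² + ⋯ + (a_m/(m+1)) π^{m+1} T^{m+1} + ⋯` with
`a_i ∈ O`, `v(a_i) > 0` for `i < n` and `a_n` a unit.  Then `λ` has at most
`n + 1 + δ(v,n)` zeros in `O` (zeros being points of `O` where the partial sums of
`λ` converge to `0`). -/
theorem stmt_11 {K : Type*} [Field K] [Valued K (WithZero (Multiplicative ℤ))]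
    [CompleteSpace K]
    (p : ℕ) (hp : p.Prime) (e : ℕ) (he : 1 ≤ e)
    (π : K)
    (hπ : Valued.v π = ((Multiplicative.ofAdd (-1 : ℤ) : Multiplicative ℤ) :
      WithZero (Multiplicative ℤ)))
    (hpval : Valued.v (p : K) = ((Multiplicative.ofAdd (-(e : ℤ)) : Multiplicative ℤ) :
      WithZero (Multiplicative ℤ)))
    (c : K) (a : ℕ → K) (n : ℕ)
    (ha : ∀ i, Valued.v (a i) ≤ 1)
    (halow : ∀ i < n, Valued.v (a i) < 1)
    (han : Valued.v (a n) = 1) :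
    {x : K | Valued.v x ≤ 1 ∧
        Filter.Tendsto (fun N => ∑ m ∈ Finset.range N, lamCoeff c a π m * x ^ m)
          Filter.atTop (nhds 0)}.Finite ∧
      {x : K | Valued.v x ≤ 1 ∧
        Filter.Tendsto (fun N => ∑ m ∈ Finset.range N, lamCoeff c a π m * x ^ m)
          Filter.atTop (nhds 0)}.ncard ≤ n + 1 + deltaFn p e n := by
  haveI : Fact p.Prime := ⟨hp⟩
  have hCS : CompleteSpace K := ‹_›
  -- Elementary valuation facts
  have hvnat_le : ∀ k : ℕ, Valued.v ((k : ℕ) : K) ≤ 1 := by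
    intro k
    induction k with
    | zero => rw [Nat.cast_zero, map_zero]; exact zero_le_one
    | succ k ih =>
      rw [Nat.cast_succ]
      exact le_trans (Valued.v.map_add _ _) (max_le ih (by rw [map_one]))
  have hvint_le : ∀ z : ℤ, Valued.v ((z : ℤ) : K) ≤ 1 := by
    intro z
    rcases Int.natAbs_eq z with h | h
    · rw [h, Int.cast_natCast]; exact hvnat_le _
    · rw [h, Int.cast_neg, Int.cast_natCast, Valuation.map_neg]; exact hvnat_le _
  have hvp_lt : Valued.v ((p : ℕ) : K) < 1 := by
    rw [hpval, ← WithZero.coe_one]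
    rw [WithZero.coe_lt_coe, ← ofAdd_zero, Multiplicative.ofAdd_lt]
    omega
  have hvunit : ∀ u : ℕ, ¬ p ∣ u → Valued.v ((u : ℕ) : K) = 1 := by
    intro u hu
    have hcop : IsCoprime (u : ℤ) (p : ℤ) := by
      rw [Int.isCoprime_iff_gcd_eq_one, Int.gcd_natCast_natCast]
      exact Nat.coprime_comm.mp ((Nat.Prime.coprime_iff_not_dvd hp).mpr hu)
    obtain ⟨s, t, hst⟩ := hcop
    have hstK : (s : K) * (u : K) + (t : K) * (p : K) = 1 := by
      have hcast := congrArg (fun z : ℤ => (z : K)) hst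
      push_cast at hcast
      simpa using hcast
    have h1 : (1 : WithZero (Multiplicative ℤ)) ≤
        max (Valued.v ((s : K) * u)) (Valued.v ((t : K) * p)) := by
      have h := Valued.v.map_add ((s : K) * u) ((t : K) * p)
      rw [hstK, map_one] at h
      exact h
    have h2 : Valued.v ((t : K) * (p : K)) < 1 := by
      rw [map_mul]
      calc Valued.v ((t : ℤ) : K) * Valued.v ((p : ℕ) : K)
          ≤ 1 * Valued.v ((p : ℕ) : K) := mul_le_mul_left (hvint_le t) _
        _ = Valued.v ((p : ℕ) : K) := one_mul _
        _ < 1 := hvp_lt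
    have h3 : (1 : WithZero (Multiplicative ℤ)) ≤ Valued.v ((s : K) * u) := by
      rcases max_cases (Valued.v ((s : K) * u)) (Valued.v ((t : K) * p)) with
        ⟨hmax, _⟩ | ⟨hmax, _⟩
      · rwa [hmax] at h1
      · rw [hmax] at h1; exact absurd (lt_of_le_of_lt h1 h2) (lt_irrefl _)
    have h4 : (1 : WithZero (Multiplicative ℤ)) ≤ Valued.v ((u : ℕ) : K) := by
      rw [map_mul] at h3
      calc (1 : WithZero (Multiplicative ℤ))
          ≤ Valued.v ((s : ℤ) : K) * Valued.v ((u : ℕ) : K) := h3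
        _ ≤ 1 * Valued.v ((u : ℕ) : K) := mul_le_mul_left (hvint_le s) _
        _ = Valued.v ((u : ℕ) : K) := one_mul _
    exact le_antisymm (hvnat_le u) h4
  have hvm : ∀ m : ℕ, m ≠ 0 → Valued.v ((m : ℕ) : K) =
      ((Multiplicative.ofAdd (-((e * padicValNat p m : ℕ) : ℤ)) : Multiplicative ℤ) :
        WithZero (Multiplicative ℤ)) := by
    intro m hm
    set k := padicValNat p m with hk
    have hdvd : p ^ k ∣ m := pow_padicValNat_dvd
    obtain ⟨u, hu⟩ := hdvd
    have hpu : ¬ p ∣ u := by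
      intro hdu
      obtain ⟨w, hw⟩ := hdu
      have hdvd2 : p ^ (k + 1) ∣ m := ⟨w, by rw [hu, hw, pow_succ]; ring⟩
      exact pow_succ_padicValNat_not_dvd hm hdvd2
    have hcast : ((m : ℕ) : K) = ((p : ℕ) : K) ^ k * ((u : ℕ) : K) := by
      rw [hu]; push_cast; ring
    rw [hcast, map_mul, map_pow, hpval, hvunit u hpu, mul_one, coeOfAddPow]
    have harith : ((k : ℤ)) * (-(e : ℤ)) = -((e * k : ℕ) : ℤ) := by push_cast; ring
    rw [harith]
  have hvc : ∀ m : ℕ, m ≠ 0 → Valued.v (lamCoeff c a π m) =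
      Valued.v (a (m - 1)) *
        ((Multiplicative.ofAdd ((((e * padicValNat p m : ℕ)) : ℤ) - (m : ℤ)) :
          Multiplicative ℤ) : WithZero (Multiplicative ℤ)) := by
    intro m hm
    have hunfold : lamCoeff c a π m = a (m - 1) * π ^ m / (m : K) := by
      simp only [lamCoeff, if_neg hm]
    rw [hunfold, map_div₀, map_mul, map_pow, hπ, hvm m hm, coeOfAddPow]
    rw [mul_div_assoc, ← WithZero.coe_div, ← ofAdd_sub]
    have harith : (m : ℤ) * (-1) - (-((e * padicValNat p m : ℕ) : ℤ)) =
        ((e * padicValNat p m : ℕ) : ℤ) - (m : ℤ) := by push_cast; ring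
    rw [harith]
  have hvπpow : ∀ j : ℕ, Valued.v (π ^ j) =
      ((Multiplicative.ofAdd (-(j : ℤ)) : Multiplicative ℤ) :
        WithZero (Multiplicative ℤ)) := by
    intro j
    rw [map_pow, hπ, coeOfAddPow]
    have harith : (j : ℤ) * (-1) = -(j : ℤ) := by ring
    rw [harith]
  have hπne : π ≠ 0 := by
    intro h
    rw [h, map_zero] at hπ
    exact WithZero.zero_ne_coe hπ
  -- value of the pivotal coefficient
  have hvcn1 : Valued.v (lamCoeff c a π (n + 1)) =
      ((Multiplicative.ofAdd ((((e * padicValNat p (n + 1) : ℕ)) : ℤ) - ((n + 1 : ℕ) : ℤ)) :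
        Multiplicative ℤ) : WithZero (Multiplicative ℤ)) := by
    rw [hvc (n + 1) (by omega)]
    simp only [Nat.add_sub_cancel]
    rw [han, one_mul]
  have hcn1ne : lamCoeff c a π (n + 1) ≠ 0 := by
    intro h
    rw [h, map_zero] at hvcn1
    exact WithZero.zero_ne_coe hvcn1
  -- Install the norm structure
  have hnontriv : ∃ r : K, (Valued.v : Valuation K (WithZero (Multiplicative ℤ))) r ≠ 0 ∧
      (Valued.v : Valuation K (WithZero (Multiplicative ℤ))) r ≠ 1 := by
    refine ⟨π, ?_, ?_⟩
    · rw [hπ]; exact WithZero.coe_ne_zero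
    · rw [hπ, ← WithZero.coe_one]
      intro h
      rw [WithZero.coe_inj, ← ofAdd_zero] at h
      have := Multiplicative.ofAdd.injective h
      omega
  letI rk : Valuation.RankOne (Valued.v : Valuation K (WithZero (Multiplicative ℤ))) :=
    { hom' := (WithZeroMulInt.toNNReal (ne_zero_of_lt one_lt_two)).comp
        MonoidWithZeroHom.ValueGroup₀.embedding
      strictMono' := (WithZeroMulInt.toNNReal_strictMono one_lt_two).comp
        MonoidWithZeroHom.ValueGroup₀.embedding_strictMono
      exists_val_nontrivial := hnontriv }
  letI : NormedField K := Valued.toNormedField K (WithZero (Multiplicative ℤ))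
  haveI : IsUltrametricDist K :=
    IsUltrametricDist.isUltrametricDist_of_isNonarchimedean_norm
      (Valued.isNonarchimedean_norm K (WithZero (Multiplicative ℤ)))
  haveI : CompleteSpace K := hCS
  -- Norm facts
  have hπlt1 : ‖π‖ < 1 := by
    rw [Valued.toNormedField.norm_lt_one_iff, hπ, ← WithZero.coe_one, WithZero.coe_lt_coe,
      ← ofAdd_zero, Multiplicative.ofAdd_lt]
    omega
  -- the norms of the coefficients tend to zero
  have htendnorm : Tendsto (fun m => ‖lamCoeff c a π m‖) atTop (nhds 0) := by
    rw [Metric.tendsto_atTop]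
    intro ε hε
    obtain ⟨j, hj⟩ := exists_pow_lt_of_lt_one hε hπlt1
    obtain ⟨D, hD⟩ := auxLinearLtPow j e
    refine ⟨j + e * D + 1, fun m hm => ?_⟩
    have hm1 : m ≠ 0 := by omega
    have hgrow : e * padicValNat p m + j ≤ m := by
      set k := padicValNat p m with hk
      have hdvd : p ^ k ∣ m := pow_padicValNat_dvd
      have h2k : 2 ^ k ≤ m :=
        le_trans (Nat.pow_le_pow_left hp.two_le k) (Nat.le_of_dvd (by omega) hdvd)
      rcases le_or_gt D k with h | h
      · have := hD k h; omega
      · have : e * k ≤ e * D := Nat.mul_le_mul_left e h.le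
        omega
    have hvle : Valued.v (lamCoeff c a π m) ≤ Valued.v (π ^ j) := by
      rw [hvc m hm1, hvπpow j]
      calc Valued.v (a (m - 1)) *
            ((Multiplicative.ofAdd ((((e * padicValNat p m : ℕ)) : ℤ) - (m : ℤ)) :
              Multiplicative ℤ) : WithZero (Multiplicative ℤ))
          ≤ 1 * ((Multiplicative.ofAdd ((((e * padicValNat p m : ℕ)) : ℤ) - (m : ℤ)) :
              Multiplicative ℤ) : WithZero (Multiplicative ℤ)) :=
            mul_le_mul_left (ha (m - 1)) _
        _ = ((Multiplicative.ofAdd ((((e * padicValNat p m : ℕ)) : ℤ) - (m : ℤ)) :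
              Multiplicative ℤ) : WithZero (Multiplicative ℤ)) := one_mul _
        _ ≤ ((Multiplicative.ofAdd (-(j : ℤ)) : Multiplicative ℤ) :
              WithZero (Multiplicative ℤ)) := by
            rw [WithZero.coe_le_coe, Multiplicative.ofAdd_le]
            omega
    have hnle : ‖lamCoeff c a π m‖ ≤ ‖π‖ ^ j := by
      rw [← norm_pow]
      exact Valued.toNormedField.norm_le_iff.mpr hvle
    rw [Real.dist_eq, sub_zero, abs_of_nonneg (norm_nonneg _)]
    exact lt_of_le_of_lt hnle hj
  -- boundedness of the defining set of `deltaFn`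
  obtain ⟨D₂, hD₂⟩ := auxLinearLtPow (n + 1) e
  have hSbdd : BddAbove {d : ℕ | e * padicValNat p (n + 1) + d ≤ e * padicValNat p (n + d + 1)} := by
    refine ⟨e * D₂, fun d hd => ?_⟩
    rw [Set.mem_setOf_eq] at hd
    set k := padicValNat p (n + d + 1) with hk
    have h2k : 2 ^ k ≤ n + d + 1 :=
      le_trans (Nat.pow_le_pow_left hp.two_le k) (Nat.le_of_dvd (by omega) pow_padicValNat_dvd)
    have hdk : d ≤ e * k := by omega
    rcases le_or_gt D₂ k with h | h
    · have := hD₂ k h; omega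
    · have : e * k ≤ e * D₂ := Nat.mul_le_mul_left e h.le
      omega
  have hdelta : ∀ d, deltaFn p e n < d →
      ¬ (e * padicValNat p (n + 1) + d ≤ e * padicValNat p (n + d + 1)) := by
    intro d hd hmem
    have : d ≤ deltaFn p e n := le_csSup hSbdd hmem
    omega
  -- coefficients beyond `n + 1 + δ` are strictly smaller
  have hkeylt : ∀ m, n + 1 + deltaFn p e n < m →
      ‖lamCoeff c a π m‖ < ‖lamCoeff c a π (n + 1)‖ := by
    intro m hm
    refine Valued.toNormedField.norm_lt_iff.mpr ?_
    rw [hvc m (by omega), hvcn1]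
    have hd : deltaFn p e n < m - n - 1 := by omega
    have hnot := hdelta (m - n - 1) hd
    rw [show n + (m - n - 1) + 1 = m from by omega] at hnot
    have hnat : e * padicValNat p m < e * padicValNat p (n + 1) + (m - n - 1) := by omega
    calc Valued.v (a (m - 1)) *
          ((Multiplicative.ofAdd ((((e * padicValNat p m : ℕ)) : ℤ) - (m : ℤ)) :
            Multiplicative ℤ) : WithZero (Multiplicative ℤ))
        ≤ 1 * ((Multiplicative.ofAdd ((((e * padicValNat p m : ℕ)) : ℤ) - (m : ℤ)) :
            Multiplicative ℤ) : WithZero (Multiplicative ℤ)) :=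
          mul_le_mul_left (ha (m - 1)) _
      _ = ((Multiplicative.ofAdd ((((e * padicValNat p m : ℕ)) : ℤ) - (m : ℤ)) :
            Multiplicative ℤ) : WithZero (Multiplicative ℤ)) := one_mul _
      _ < ((Multiplicative.ofAdd ((((e * padicValNat p (n + 1) : ℕ)) : ℤ) - ((n + 1 : ℕ) : ℤ)) :
            Multiplicative ℤ) : WithZero (Multiplicative ℤ)) := by
          rw [WithZero.coe_lt_coe, Multiplicative.ofAdd_lt]
          omega
  -- the Strassmann index
  have hcn1pos : 0 < ‖lamCoeff c a π (n + 1)‖ := norm_pos_iff.mpr hcn1ne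
  obtain ⟨N, hNle, hNlt⟩ := exists_forall_le_of_tendsto_zero
    (fun m => ‖lamCoeff c a π m‖) htendnorm (n + 1) hcn1pos
  have hNbnd : N ≤ n + 1 + deltaFn p e n := by
    by_contra hcon
    exact absurd (hNle (n + 1)) (not_le.mpr (hkeylt N (by omega)))
  have hcN0 : lamCoeff c a π N ≠ 0 :=
    norm_pos_iff.mp (lt_of_lt_of_le hcn1pos (hNle (n + 1)))
  obtain ⟨hfin, hcard⟩ := strassmann N (lamCoeff c a π) htendnorm hcN0 hNle hNlt
  constructor
  · exact hfin.subset fun x hx => ⟨Valued.toNormedField.norm_le_one_iff.mpr hx.1, hx.2⟩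
  · refine le_trans (Set.ncard_le_ncard ?_ hfin) ?_
    · exact fun x hx => ⟨Valued.toNormedField.norm_le_one_iff.mpr hx.1, hx.2⟩
    · omega
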